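/- Let A, B be n×n positive definite complex matrices. Then det(A ♯ B) ≤ (1/2ⁿ)·det(I + A)·det(I + B), where A ♯ B is the geometric mean (v = 1/2). (α = 0 case of Proposition 3.3.) -/

import Mathlib

open Matrix
open scoped ComplexOrder

noncomputable section
namespace Paper

variable {n : ℕ}

/-- Real part `(A + Aᴴ)/2`. -/
def re (A : Matrix (Fin n) (Fin n) ℂ) : Matrix (Fin n) (Fin n) ℂ := (2⁻¹ : ℂ) • (A + Aᴴ)

/-- Imaginary part `(A - Aᴴ)/(2i)`. -/
def im (A : Matrix (Fin n) (Fin n) ℂ) : Matrix (Fin n) (Fin n) ℂ :=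
  (2 * Complex.I)⁻¹ • (A - Aᴴ)

/-- The sector `S_α`. -/
def sector (α : ℝ) : Set ℂ := {z | 0 < z.re ∧ |z.im| ≤ z.re * Real.tan α}

/-- Numerical range of a matrix. -/
def numericalRange (A : Matrix (Fin n) (Fin n) ℂ) : Set ℂ :=
  {z | ∃ x : Fin n → ℂ, star x ⬝ᵥ x = 1 ∧ z = star x ⬝ᵥ (A *ᵥ x)}

/-- Loewner order: `X ≤ Y` iff `Y - X` is positive semidefinite. -/
def loewnerLE (X Y : Matrix (Fin n) (Fin n) ℂ) : Prop := (Y - X).PosSemidef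

lemma re_isHermitian (A : Matrix (Fin n) (Fin n) ℂ) : (re A).IsHermitian := by
  show ((2⁻¹ : ℂ) • (A + Aᴴ))ᴴ = (2⁻¹ : ℂ) • (A + Aᴴ)
  rw [Matrix.conjTranspose_smul, Matrix.conjTranspose_add,
    Matrix.conjTranspose_conjTranspose, add_comm Aᴴ A]
  simp

/-- The `j`-th largest element of `v` (descending sort). -/
def nthLargest (v : Fin n → ℝ) (j : Fin n) : ℝ :=
  ((List.ofFn v).mergeSort (fun a b => decide (b ≤ a))).get
    (Fin.cast (by simp) j)

/-- `j`-th largest eigenvalue of a Hermitian matrix. -/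
def eigDesc {A : Matrix (Fin n) (Fin n) ℂ} (hA : A.IsHermitian) (j : Fin n) : ℝ :=
  nthLargest hA.eigenvalues j

/-- `j`-th largest singular value. -/
def singular (A : Matrix (Fin n) (Fin n) ℂ) (j : Fin n) : ℝ :=
  nthLargest (fun i => Real.sqrt ((Matrix.isHermitian_conjTranspose_mul_self A).eigenvalues i)) j

/-- Square root of a positive semidefinite matrix (the former `Matrix.PosSemidef.sqrt`). -/
def psdSqrt {A : Matrix (Fin n) (Fin n) ℂ} (hA : A.PosSemidef) : Matrix (Fin n) (Fin n) ℂ :=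
  (hA.1.eigenvectorUnitary : Matrix (Fin n) (Fin n) ℂ) *
    diagonal (((↑) : ℝ → ℂ) ∘ Real.sqrt ∘ hA.1.eigenvalues) *
    (star hA.1.eigenvectorUnitary : Matrix (Fin n) (Fin n) ℂ)

/-- Weighted geometric mean of positive definite matrices. -/
def sharp (v : ℝ) {A B : Matrix (Fin n) (Fin n) ℂ} (hA : A.PosDef) (hB : B.PosDef) :
    Matrix (Fin n) (Fin n) ℂ :=
  psdSqrt hA.posSemidef *
    (Matrix.isHermitian_mul_mul_conjTranspose (psdSqrt hA.posSemidef)⁻¹ hB.1).cfc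
      (fun x => Real.rpow x v) * psdSqrt hA.posSemidef

/-- Weighted arithmetic mean. -/
def arith (v : ℝ) (A B : Matrix (Fin n) (Fin n) ℂ) : Matrix (Fin n) (Fin n) ℂ :=
  (1 - v) • A + v • B

/-- Weighted harmonic mean. -/
def harm (v : ℝ) (A B : Matrix (Fin n) (Fin n) ℂ) : Matrix (Fin n) (Fin n) ℂ :=
  ((1 - v) • A⁻¹ + v • B⁻¹)⁻¹

/-- Kantorovich constant. -/
def K (h : ℝ) : ℝ := (h + 1) ^ 2 / (4 * h)


lemma det_unitary_conj (U : unitary (Matrix (Fin n) (Fin n) ℂ)) (D : Matrix (Fin n) (Fin n) ℂ) :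
    ((U : Matrix (Fin n) (Fin n) ℂ) * D * star (U : Matrix (Fin n) (Fin n) ℂ)).det = D.det := by
  have h : det (star (U : Matrix (Fin n) (Fin n) ℂ)) * det (U : Matrix (Fin n) (Fin n) ℂ) = 1 := by
    rw [← det_mul, Unitary.coe_star_mul_self, det_one]
  rw [det_mul, det_mul]
  linear_combination det D * h

lemma det_cfc {A : Matrix (Fin n) (Fin n) ℂ} (hA : A.IsHermitian) (f : ℝ → ℝ) :
    (hA.cfc f).det = ((∏ i, f (hA.eigenvalues i) : ℝ) : ℂ) := by
  rw [Matrix.IsHermitian.cfc, Unitary.conjStarAlgAut_apply, det_unitary_conj, det_diagonal]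
  push_cast
  rfl

lemma det_sqrt {A : Matrix (Fin n) (Fin n) ℂ} (hA : A.PosSemidef) :
    (psdSqrt hA).det = ((∏ i, Real.sqrt (hA.1.eigenvalues i) : ℝ) : ℂ) := by
  rw [psdSqrt, det_unitary_conj, det_diagonal]
  push_cast
  rfl

lemma det_one_add {A : Matrix (Fin n) (Fin n) ℂ} (hA : A.IsHermitian) :
    (1 + A).det = ((∏ i, (1 + hA.eigenvalues i) : ℝ) : ℂ) := by
  have h : (1 : Matrix (Fin n) (Fin n) ℂ) + A =
      (hA.eigenvectorUnitary : Matrix (Fin n) (Fin n) ℂ) *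
        (1 + diagonal (RCLike.ofReal ∘ hA.eigenvalues)) *
        star (hA.eigenvectorUnitary : Matrix (Fin n) (Fin n) ℂ) := by
    rw [mul_add, mul_one, add_mul, ← Unitary.conjStarAlgAut_apply (S := ℂ), ← hA.spectral_theorem, ← Unitary.coe_star,
      Unitary.coe_mul_star_self]
  rw [h, det_unitary_conj]
  have h2 : (1 : Matrix (Fin n) (Fin n) ℂ) + diagonal (RCLike.ofReal ∘ hA.eigenvalues) =
      diagonal (fun i => 1 + (hA.eigenvalues i : ℂ)) := by
    rw [← diagonal_one, diagonal_add]
    rfl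
  rw [h2, det_diagonal]
  push_cast
  rfl

lemma two_sqrt_le (x : ℝ) (hx : 0 ≤ x) : 2 * Real.sqrt x ≤ 1 + x := by
  nlinarith [Real.sq_sqrt hx, Real.sqrt_nonneg x, sq_nonneg (Real.sqrt x - 1)]

set_option maxHeartbeats 1000000 in
/-- `det (A ♯ B) ≤ 2⁻ⁿ det (I + A) det (I + B)`. -/
theorem det_sharp_le (A B : Matrix (Fin n) (Fin n) ℂ) (hA : A.PosDef) (hB : B.PosDef) :
    ((sharp (1 / 2) hA hB).det).re ≤
      (1 / 2 ^ n) * ((1 + A).det).re * ((1 + B).det).re := by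
  set S := psdSqrt hA.posSemidef with hSdef
  have hM : (S⁻¹ * B * S⁻¹ᴴ).IsHermitian :=
    Matrix.isHermitian_mul_mul_conjTranspose _ hB.1
  set μ : Fin n → ℝ := hA.1.eigenvalues with hμdef
  set β : Fin n → ℝ := hB.1.eigenvalues with hβdef
  set ν : Fin n → ℝ := hM.eigenvalues with hνdef
  have hμpos : ∀ i, 0 < μ i := hA.eigenvalues_pos
  have hβpos : ∀ i, 0 < β i := hB.eigenvalues_pos
  have hνnn : ∀ i, 0 ≤ ν i := fun i =>
    (hB.posSemidef.mul_mul_conjTranspose_same S⁻¹).eigenvalues_nonneg i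
  set p : ℝ := ∏ i, Real.sqrt (μ i) with hpdef
  set q : ℝ := ∏ i, Real.sqrt (β i) with hqdef
  set r : ℝ := ∏ i, Real.sqrt (ν i) with hrdef
  have hp : 0 < p := Finset.prod_pos fun i _ => Real.sqrt_pos.2 (hμpos i)
  have hq : 0 < q := Finset.prod_pos fun i _ => Real.sqrt_pos.2 (hβpos i)
  have hr : 0 ≤ r := Finset.prod_nonneg fun i _ => Real.sqrt_nonneg _
  have hdetS : S.det = (p : ℂ) := det_sqrt hA.posSemidef
  have hp2 : p * p = ∏ i, μ i := by
    rw [← Finset.prod_mul_distrib]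
    exact Finset.prod_congr rfl fun i _ => Real.mul_self_sqrt (hμpos i).le
  have hq2 : q * q = ∏ i, β i := by
    rw [← Finset.prod_mul_distrib]
    exact Finset.prod_congr rfl fun i _ => Real.mul_self_sqrt (hβpos i).le
  have hr2 : r * r = ∏ i, ν i := by
    rw [← Finset.prod_mul_distrib]
    exact Finset.prod_congr rfl fun i _ => Real.mul_self_sqrt (hνnn i)
  -- invertibility of S
  have hSunit : IsUnit S.det := by
    rw [hdetS]; exact isUnit_iff_ne_zero.2 (by exact_mod_cast hp.ne')
  have h1 : S * S⁻¹ = 1 := mul_nonsing_inv S hSunit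
  have hSB : S * (S⁻¹ * B * S⁻¹ᴴ) * Sᴴ = B := by
    have h2 : S⁻¹ᴴ * Sᴴ = 1 := by rw [← conjTranspose_mul, h1, conjTranspose_one]
    calc S * (S⁻¹ * B * S⁻¹ᴴ) * Sᴴ = S * S⁻¹ * (B * (S⁻¹ᴴ * Sᴴ)) := by
          simp only [Matrix.mul_assoc]
      _ = B := by rw [h1, h2, Matrix.one_mul, Matrix.mul_one]
  -- determinant relation
  have hdetM : (S⁻¹ * B * S⁻¹ᴴ).det = ((∏ i, ν i : ℝ) : ℂ) := by
    rw [hM.det_eq_prod_eigenvalues]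
    push_cast
    rfl
  have hdetB : B.det = ((∏ i, β i : ℝ) : ℂ) := by
    rw [hB.1.det_eq_prod_eigenvalues]
    push_cast
    rfl
  have hdetSH : Sᴴ.det = (p : ℂ) := by
    rw [det_conjTranspose, hdetS, Complex.star_def, Complex.conj_ofReal]
  have hkey : p * (∏ i, ν i) * p = ∏ i, β i := by
    have := congrArg Matrix.det hSB
    rw [det_mul, det_mul, hdetS, hdetM, hdetSH, hdetB] at this
    exact_mod_cast this
  -- determinant of sharp
  have hdetsharp : (sharp (1 / 2) hA hB).det = ((p * r * p : ℝ) : ℂ) := by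
    have hcfc : ((Matrix.isHermitian_mul_mul_conjTranspose (S)⁻¹ hB.1).cfc
        (fun x => Real.rpow x (1 / 2))).det = (r : ℂ) := by
      rw [det_cfc]
      norm_cast
      exact Finset.prod_congr rfl fun i _ => (Real.sqrt_eq_rpow _).symm
    have e : sharp (1 / 2) hA hB = S *
        ((Matrix.isHermitian_mul_mul_conjTranspose (S)⁻¹ hB.1).cfc
          (fun x => Real.rpow x (1 / 2))) * S := rfl
    rw [e, det_mul, det_mul, hdetS, hcfc]
    push_cast
    ring
  have hreS : ((sharp (1 / 2) hA hB).det).re = p * r * p := by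
    rw [hdetsharp, Complex.ofReal_re]
  have hreA : ((1 + A).det).re = ∏ i, (1 + μ i) := by
    rw [det_one_add hA.1, Complex.ofReal_re]
  have hreB : ((1 + B).det).re = ∏ i, (1 + β i) := by
    rw [det_one_add hB.1, Complex.ofReal_re]
  rw [hreS, hreA, hreB]
  -- p * r * p = p * q
  have hpr : p * r = q := by
    have hsq : (p * r) * (p * r) = q * q := by
      rw [hq2, ← hkey]; nlinarith [hr2]
    nlinarith [mul_nonneg hp.le hr, hq]
  -- product bounds
  have hPA : 2 ^ n * p ≤ ∏ i, (1 + μ i) := by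
    calc 2 ^ n * p = ∏ i, (2 * Real.sqrt (μ i)) := by
          rw [Finset.prod_mul_distrib, Finset.prod_const, Finset.card_univ, Fintype.card_fin,
            hpdef]
      _ ≤ ∏ i, (1 + μ i) := Finset.prod_le_prod
          (fun i _ => by positivity) (fun i _ => two_sqrt_le _ (hμpos i).le)
  have hPB : 2 ^ n * q ≤ ∏ i, (1 + β i) := by
    calc 2 ^ n * q = ∏ i, (2 * Real.sqrt (β i)) := by
          rw [Finset.prod_mul_distrib, Finset.prod_const, Finset.card_univ, Fintype.card_fin,
            hqdef]
      _ ≤ ∏ i, (1 + β i) := Finset.prod_le_prod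
          (fun i _ => by positivity) (fun i _ => two_sqrt_le _ (hβpos i).le)
  have h2n : (0 : ℝ) < 2 ^ n := by positivity
  have h2n1 : (1 : ℝ) ≤ 2 ^ n := one_le_pow₀ one_le_two
  have hprod : (2 ^ n * p) * (2 ^ n * q) ≤ (∏ i, (1 + μ i)) * (∏ i, (1 + β i)) :=
    mul_le_mul hPA hPB (by positivity) (le_trans (by positivity) hPA)
  rw [show (1 / 2 ^ n : ℝ) * (∏ i, (1 + μ i)) * (∏ i, (1 + β i))
      = (∏ i, (1 + μ i)) * (∏ i, (1 + β i)) / 2 ^ n from by ring, le_div_iff₀ h2n]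
  have hgoal : p * r * p * 2 ^ n = (p * q) * 2 ^ n := by
    rw [show p * r * p = p * (p * r) from by ring, hpr]
  rw [hgoal]
  nlinarith [hprod, mul_pos (mul_pos hp hq) h2n, h2n1]
end Paper
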